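/- arXiv:1107.2214 — 3 statements merged into one kernel-verified Lean document; each statement's English description precedes it below -/
import Mathlib

section
/- In this setup, the set T of triple points of the arrangement 𝒜 decomposes as T = T₀ ∪ T₁ ∪ T₂ ∪ T₃, the four sets T₀, T₁, T₂, T₃ are pairwise disjoint, and the base point set T₀ consists of exactly m² points. -/
open MvPolynomial Finset

noncomputable section

/-- `S = ℂ[x,y,z]`, the polynomial ring in three variables over `ℂ`. -/
abbrev MvP : Type := MvPolynomial (Fin 3) ℂ

/-- The complex projective plane `ℙ²(ℂ)`. -/
abbrev P2 : Type := Projectivization ℂ (Fin 3 → ℂ)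

/-- Evaluation of a polynomial at the chosen representative of a projective point. -/
def pev (h : MvP) (t : P2) : ℂ := eval t.rep h

/-- `PencilSetup m L` : the `L i j` (`i : Fin 3`, `j : Fin m`) are the linear forms of a
line arrangement `𝒜` of `3*m` lines in `ℙ²(ℂ)` (with `2 ≤ m`), grouped into three
subarrangements `𝒜ᵢ : Qᵢ = 0` where `Qᵢ = ∏ⱼ L i j` and `Q₁ + Q₂ = Q₃`
(so `𝒜` is composed of a reduced pencil), the `3*m` linear forms being pairwise
non-proportional, and no point of `ℙ²(ℂ)` lying on four or more of the `3*m` lines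
(`𝒜` has only double and triple points). -/
def PencilSetup (m : ℕ) (L : Fin 3 → Fin m → MvP) : Prop :=
  2 ≤ m ∧
  (∀ i j, (L i j).IsHomogeneous 1 ∧ L i j ≠ 0) ∧
  ((∏ j, L 0 j) + (∏ j, L 1 j) = ∏ j, L 2 j) ∧
  (∀ (i j i' j'), (i, j) ≠ (i', j') → ∀ c : ℂ, L i j ≠ c • L i' j') ∧
  (∀ t : P2, {p : Fin 3 × Fin m | pev (L p.1 p.2) t = 0}.ncard ≤ 3)

/-- The defining equation `Qᵢ₊₁` of the subarrangement `𝒜ᵢ₊₁`. -/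
def Qpoly {m : ℕ} (L : Fin 3 → Fin m → MvP) (i : Fin 3) : MvP := ∏ j, L i j

/-- `T₀`, the base point set of the pencil, i.e. the common zeros of `Q₁` and `Q₂`. -/
def T0set {m : ℕ} (L : Fin 3 → Fin m → MvP) : Set P2 :=
  {t | pev (Qpoly L 0) t = 0 ∧ pev (Qpoly L 1) t = 0}

/-- `Tᵢ₊₁`, the set of points lying on exactly three lines of the subarrangement `𝒜ᵢ₊₁`. -/
def Tsub {m : ℕ} (L : Fin 3 → Fin m → MvP) (i : Fin 3) : Set P2 :=
  {t | {j : Fin m | pev (L i j) t = 0}.ncard = 3}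

/-- `T`, the set of points lying on exactly three of the `3*m` lines of `𝒜`. -/
def Tall {m : ℕ} (L : Fin 3 → Fin m → MvP) : Set P2 :=
  {t | {p : Fin 3 × Fin m | pev (L p.1 p.2) t = 0}.ncard = 3}

namespace PencilAux

open Matrix

/-! ### Linear forms and their coefficient vectors -/

lemma single_of_degree_one (d : Fin 3 →₀ ℕ) (hd : d.degree = 1) :
    ∃ i, d = Finsupp.single i 1 := by
  have hsum : d 0 + d 1 + d 2 = 1 := by
    have : d.degree = ∑ i : Fin 3, d i := by
      rw [Finsupp.degree]
      exact Finset.sum_subset (Finset.subset_univ _)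
        (fun x _ hx => Finsupp.notMem_support_iff.mp hx)
    rw [this, Fin.sum_univ_three] at hd; omega
  have hcases : (d 0 = 1 ∧ d 1 = 0 ∧ d 2 = 0) ∨ (d 0 = 0 ∧ d 1 = 1 ∧ d 2 = 0) ∨
      (d 0 = 0 ∧ d 1 = 0 ∧ d 2 = 1) := by omega
  rcases hcases with ⟨h0, h1, h2⟩ | ⟨h0, h1, h2⟩ | ⟨h0, h1, h2⟩
  · exact ⟨0, Finsupp.ext fun i => by fin_cases i <;> simp [Finsupp.single_apply, h0, h1, h2]⟩
  · exact ⟨1, Finsupp.ext fun i => by fin_cases i <;> simp [Finsupp.single_apply, h0, h1, h2]⟩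
  · exact ⟨2, Finsupp.ext fun i => by fin_cases i <;> simp [Finsupp.single_apply, h0, h1, h2]⟩

/-- Coefficient vector of a linear form. -/
def lvec (p : MvP) : Fin 3 → ℂ := fun i => coeff (Finsupp.single i 1) p

lemma lin_rep (p : MvP) (hp : p.IsHomogeneous 1) :
    p = ∑ i : Fin 3, C (lvec p i) * X i := by
  classical
  ext d
  rw [MvPolynomial.coeff_sum]
  by_cases hd : d.degree = 1
  · obtain ⟨i, rfl⟩ := single_of_degree_one d hd
    rw [Finset.sum_eq_single i]
    · simp [lvec, coeff_C_mul]
    · intro j _ hji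
      simp [coeff_C_mul, coeff_X', Finsupp.single_eq_single_iff, hji]
    · simp
  · rw [hp.coeff_eq_zero hd]
    refine (Finset.sum_eq_zero fun i _ => ?_).symm
    have : Finsupp.single i 1 ≠ d := by
      intro hh; apply hd; rw [← hh]
      rw [Finsupp.degree_apply, Finsupp.support_single_ne_zero _ one_ne_zero]; simp
    simp [coeff_C_mul, coeff_X', this]

lemma eval_lin (p : MvP) (hp : p.IsHomogeneous 1) (v : Fin 3 → ℂ) :
    eval v p = ∑ i : Fin 3, lvec p i * v i := by
  conv_lhs => rw [lin_rep p hp]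
  simp

/-! ### Cross products -/

lemma cross_eq_zero_imp (a b : Fin 3 → ℂ) (ha : a ≠ 0)
    (h : crossProduct a b = 0) : ∃ c : ℂ, b = c • a := by
  have h0 := congrFun h 0
  have h1 := congrFun h 1
  have h2 := congrFun h 2
  simp [cross_apply] at h0 h1 h2
  have hex : a 0 ≠ 0 ∨ a 1 ≠ 0 ∨ a 2 ≠ 0 := by
    by_contra hc
    push_neg at hc
    exact ha (funext fun i => by fin_cases i <;> simp [hc.1, hc.2.1, hc.2.2])
  rcases hex with hk | hk | hk
  · exact ⟨b 0 / a 0, funext fun i => by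
      fin_cases i <;> (simp; field_simp) <;>
        first
          | linear_combination h0 | linear_combination h1 | linear_combination h2
          | linear_combination -h0 | linear_combination -h1 | linear_combination -h2⟩
  · exact ⟨b 1 / a 1, funext fun i => by
      fin_cases i <;> (simp; field_simp) <;>
        first
          | linear_combination h0 | linear_combination h1 | linear_combination h2
          | linear_combination -h0 | linear_combination -h1 | linear_combination -h2⟩
  · exact ⟨b 2 / a 2, funext fun i => by
      fin_cases i <;> (simp; field_simp) <;>
        first
          | linear_combination h0 | linear_combination h1 | linear_combination h2
          | linear_combination -h0 | linear_combination -h1 | linear_combination -h2⟩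

lemma cross_of_dot_zero (a b v : Fin 3 → ℂ)
    (h1 : ∑ i : Fin 3, a i * v i = 0) (h2 : ∑ i : Fin 3, b i * v i = 0) :
    crossProduct v (crossProduct a b) = 0 := by
  rw [Fin.sum_univ_three] at h1 h2
  funext i
  fin_cases i <;> simp [cross_apply] <;>
    first
      | linear_combination (b 0) * h1 - (a 0) * h2
      | linear_combination (b 1) * h1 - (a 1) * h2
      | linear_combination (b 2) * h1 - (a 2) * h2
      | linear_combination (a 0) * h2 - (b 0) * h1
      | linear_combination (a 1) * h2 - (b 1) * h1
      | linear_combination (a 2) * h2 - (b 2) * h1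

lemma dot_cross_left (a b : Fin 3 → ℂ) :
    ∑ i : Fin 3, a i * crossProduct a b i = 0 := by
  rw [Fin.sum_univ_three]; simp [cross_apply]; ring

lemma dot_cross_right (a b : Fin 3 → ℂ) :
    ∑ i : Fin 3, b i * crossProduct a b i = 0 := by
  rw [Fin.sum_univ_three]; simp [cross_apply]; ring

/-! ### Intersection points of lines -/

lemma lvec_ne_zero (p : MvP) (hp : p.IsHomogeneous 1) (h0 : p ≠ 0) : lvec p ≠ 0 := by
  intro hz
  apply h0
  rw [lin_rep p hp]
  refine Finset.sum_eq_zero fun i _ => ?_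
  rw [show lvec p i = 0 from congrFun hz i]
  simp

lemma not_smul_lvec (p q : MvP) (hp : p.IsHomogeneous 1) (hq : q.IsHomogeneous 1)
    (h : ∀ c : ℂ, q ≠ c • p) : ∀ c : ℂ, lvec q ≠ c • lvec p := by
  intro c hc
  apply h c
  rw [lin_rep q hq, lin_rep p hp, Finset.smul_sum]
  refine Finset.sum_congr rfl fun i _ => ?_
  rw [show lvec q i = c * lvec p i from congrFun hc i, smul_eq_C_mul, C_mul]
  ring

/-- Intersection point of two lines. -/
def ipt (p q : MvP) (hv : crossProduct (lvec p) (lvec q) ≠ 0) : P2 :=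
  Projectivization.mk ℂ (crossProduct (lvec p) (lvec q)) hv

lemma cross_ne_zero (p q : MvP) (hp : p.IsHomogeneous 1) (hq : q.IsHomogeneous 1)
    (hp0 : p ≠ 0) (h : ∀ c : ℂ, q ≠ c • p) :
    crossProduct (lvec p) (lvec q) ≠ 0 := by
  intro hc
  obtain ⟨c, hc2⟩ := cross_eq_zero_imp _ _ (lvec_ne_zero p hp hp0) hc
  exact not_smul_lvec p q hp hq h c hc2

lemma pev_eq_dot (p : MvP) (hp : p.IsHomogeneous 1) (t : P2) :
    pev p t = ∑ i : Fin 3, lvec p i * t.rep i := eval_lin p hp t.rep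

lemma pev_ipt_left (p q : MvP) (hp : p.IsHomogeneous 1)
    (hv : crossProduct (lvec p) (lvec q) ≠ 0) : pev p (ipt p q hv) = 0 := by
  obtain ⟨u, hu⟩ := Projectivization.exists_smul_eq_mk_rep ℂ _ hv
  rw [pev_eq_dot p hp, ipt, ← hu]
  simp only [Pi.smul_apply, Units.smul_def, smul_eq_mul]
  have hd := dot_cross_left (lvec p) (lvec q)
  rw [Fin.sum_univ_three] at hd ⊢
  linear_combination (u:ℂ) * hd

lemma pev_ipt_right (p q : MvP) (hq : q.IsHomogeneous 1)
    (hv : crossProduct (lvec p) (lvec q) ≠ 0) : pev q (ipt p q hv) = 0 := by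
  obtain ⟨u, hu⟩ := Projectivization.exists_smul_eq_mk_rep ℂ _ hv
  rw [pev_eq_dot q hq, ipt, ← hu]
  simp only [Pi.smul_apply, Units.smul_def, smul_eq_mul]
  have hd := dot_cross_right (lvec p) (lvec q)
  rw [Fin.sum_univ_three] at hd ⊢
  linear_combination (u:ℂ) * hd

lemma ipt_unique (p q : MvP) (hp : p.IsHomogeneous 1) (hq : q.IsHomogeneous 1)
    (hv : crossProduct (lvec p) (lvec q) ≠ 0) (t : P2)
    (h1 : pev p t = 0) (h2 : pev q t = 0) : t = ipt p q hv := by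
  rw [pev_eq_dot p hp] at h1
  rw [pev_eq_dot q hq] at h2
  have hc := cross_of_dot_zero _ _ _ h1 h2
  have hc' : crossProduct (crossProduct (lvec p) (lvec q)) t.rep = 0 := by
    rw [← cross_anticomm, hc, neg_zero]
  obtain ⟨c, hc2⟩ := cross_eq_zero_imp _ _ hv hc'
  rw [← t.mk_rep, ipt, Projectivization.mk_eq_mk_iff']
  exact ⟨c, hc2.symm⟩

/-! ### Cardinality helpers -/

lemma le_ncard_of_finset {α : Type*} (s : Finset α) (S : Set α) (hS : S.Finite)
    (h : ∀ x ∈ s, x ∈ S) : s.card ≤ S.ncard := by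
  rw [← Set.ncard_coe_finset]
  exact Set.ncard_le_ncard (fun x hx => h x (by simpa using hx)) hS

lemma card_four {α : Type*} [DecidableEq α] (p1 p2 p3 p4 : α)
    (h12 : p1 ≠ p2) (h13 : p1 ≠ p3) (h14 : p1 ≠ p4) (h23 : p2 ≠ p3) (h24 : p2 ≠ p4)
    (h34 : p3 ≠ p4) : ({p1, p2, p3, p4} : Finset α).card = 4 := by
  rw [Finset.card_insert_of_notMem (by simp [h12, h13, h14]),
    Finset.card_insert_of_notMem (by simp [h23, h24]),
    Finset.card_insert_of_notMem (by simp [h34]), Finset.card_singleton]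

lemma card_three {α : Type*} [DecidableEq α] (p1 p2 p3 : α)
    (h12 : p1 ≠ p2) (h13 : p1 ≠ p3) (h23 : p2 ≠ p3) :
    ({p1, p2, p3} : Finset α).card = 3 := by
  rw [Finset.card_insert_of_notMem (by simp [h12, h13]),
    Finset.card_insert_of_notMem (by simp [h23]), Finset.card_singleton]

lemma four_le_ncard {α : Type*} [DecidableEq α] (p1 p2 p3 p4 : α) (S : Set α) (hS : S.Finite)
    (m1 : p1 ∈ S) (m2 : p2 ∈ S) (m3 : p3 ∈ S) (m4 : p4 ∈ S)
    (h12 : p1 ≠ p2) (h13 : p1 ≠ p3) (h14 : p1 ≠ p4) (h23 : p2 ≠ p3) (h24 : p2 ≠ p4)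
    (h34 : p3 ≠ p4) : 4 ≤ S.ncard := by
  rw [← card_four p1 p2 p3 p4 h12 h13 h14 h23 h24 h34]
  refine le_ncard_of_finset _ _ hS fun x hx => ?_
  simp only [Finset.mem_insert, Finset.mem_singleton] at hx
  rcases hx with rfl | rfl | rfl | rfl <;> assumption

lemma three_le_ncard {α : Type*} [DecidableEq α] (p1 p2 p3 : α) (S : Set α) (hS : S.Finite)
    (m1 : p1 ∈ S) (m2 : p2 ∈ S) (m3 : p3 ∈ S)
    (h12 : p1 ≠ p2) (h13 : p1 ≠ p3) (h23 : p2 ≠ p3) : 3 ≤ S.ncard := by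
  rw [← card_three p1 p2 p3 h12 h13 h23]
  refine le_ncard_of_finset _ _ hS fun x hx => ?_
  simp only [Finset.mem_insert, Finset.mem_singleton] at hx
  rcases hx with rfl | rfl | rfl <;> assumption

lemma pair_ne_fst {α β : Type*} (x y : α) (a b : β) (h : x ≠ y) : (x, a) ≠ (y, b) :=
  fun he => h (congrArg Prod.fst he)

lemma pair_ne_snd {α β : Type*} (x y : α) (a b : β) (h : a ≠ b) : (x, a) ≠ (y, b) :=
  fun he => h (congrArg Prod.snd he)

/-! ### Vanishing of the `Qᵢ` -/

lemma pevQ {m : ℕ} (L : Fin 3 → Fin m → MvP) (i : Fin 3) (t : P2) :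
    pev (Qpoly L i) t = 0 ↔ ∃ j, pev (L i j) t = 0 := by
  show eval t.rep (∏ j, L i j) = 0 ↔ _
  rw [map_prod, Finset.prod_eq_zero_iff]
  simp [pev]

lemma pevQ2 {m : ℕ} (L : Fin 3 → Fin m → MvP)
    (h3 : (∏ j, L 0 j) + (∏ j, L 1 j) = ∏ j, L 2 j) (t : P2) :
    pev (Qpoly L 2) t = pev (Qpoly L 0) t + pev (Qpoly L 1) t := by
  show eval t.rep (∏ j, L 2 j) = eval t.rep (∏ j, L 0 j) + eval t.rep (∏ j, L 1 j)
  rw [← h3, map_add]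

lemma T0_wit {m : ℕ} (L : Fin 3 → Fin m → MvP)
    (h3 : (∏ j, L 0 j) + (∏ j, L 1 j) = ∏ j, L 2 j) (t : P2) (ht : t ∈ T0set L) :
    ∃ j k l, pev (L 0 j) t = 0 ∧ pev (L 1 k) t = 0 ∧ pev (L 2 l) t = 0 := by
  obtain ⟨h0, h1⟩ := ht
  have h2 : pev (Qpoly L 2) t = 0 := by rw [pevQ2 L h3 t, h0, h1, add_zero]
  obtain ⟨j, hj⟩ := (pevQ L 0 t).mp h0
  obtain ⟨k, hk⟩ := (pevQ L 1 t).mp h1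
  obtain ⟨l, hl⟩ := (pevQ L 2 t).mp h2
  exact ⟨j, k, l, hj, hk, hl⟩

/-- If all lines through `t` lie in the single subarrangement `i`, the incidence set of `t`
is the image of the incidence set within that subarrangement. -/
lemma S_eq_image {m : ℕ} (L : Fin 3 → Fin m → MvP) (t : P2) (i : Fin 3)
    (hA : ∀ i', i' ≠ i → ¬∃ j, pev (L i' j) t = 0) :
    {p : Fin 3 × Fin m | pev (L p.1 p.2) t = 0}
      = (fun j => (i, j)) '' {j | pev (L i j) t = 0} := by
  ext ⟨i', j⟩
  simp only [Set.mem_setOf_eq, Set.mem_image]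
  constructor
  · intro hp
    have hii : i' = i := by
      by_contra hne
      exact hA i' hne ⟨j, hp⟩
    subst hii
    exact ⟨j, hp, rfl⟩
  · rintro ⟨j', hj', hj''⟩
    obtain ⟨h1, h2⟩ := Prod.mk.injEq .. ▸ hj''
    simp only [Prod.mk.injEq] at hj''
    obtain ⟨rfl, rfl⟩ := hj''
    exact hj'

lemma ncard_S_eq {m : ℕ} (L : Fin 3 → Fin m → MvP) (t : P2) (i : Fin 3)
    (hA : ∀ i', i' ≠ i → ¬∃ j, pev (L i' j) t = 0) :
    {p : Fin 3 × Fin m | pev (L p.1 p.2) t = 0}.ncard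
      = {j : Fin m | pev (L i j) t = 0}.ncard := by
  rw [S_eq_image L t i hA]
  exact Set.ncard_image_of_injective _ (fun a b hab => by simpa using hab)

end PencilAux

open PencilAux Matrix

theorem triple_points_decomposition (m : ℕ) (L : Fin 3 → Fin m → MvP)
    (h : PencilSetup m L) :
    Tall L = T0set L ∪ Tsub L 0 ∪ Tsub L 1 ∪ Tsub L 2 ∧
    (∀ i : Fin 3, Disjoint (T0set L) (Tsub L i)) ∧
    (∀ i j : Fin 3, i ≠ j → Disjoint (Tsub L i) (Tsub L j)) ∧
    (T0set L).ncard = m ^ 2 := by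
  obtain ⟨hm, hL, h3, hnp, hle3⟩ := h
  have hSfin : ∀ t : P2, ({p : Fin 3 × Fin m | pev (L p.1 p.2) t = 0}).Finite :=
    fun t => Set.toFinite _
  -- a point of T₀ has three incidences with distinct first coordinates
  have hT0sub : ∀ t ∈ T0set L, t ∈ Tall L := by
    intro t ht
    obtain ⟨j, k, l, hj, hk, hl⟩ := T0_wit L h3 t ht
    have h3le : 3 ≤ {p : Fin 3 × Fin m | pev (L p.1 p.2) t = 0}.ncard := by
      exact three_le_ncard (0, j) (1, k) (2, l) _ (hSfin t) hj hk hl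
        (pair_ne_fst _ _ _ _ (by decide)) (pair_ne_fst _ _ _ _ (by decide))
        (pair_ne_fst _ _ _ _ (by decide))
    exact le_antisymm (hle3 t) h3le
  have hTsubsub : ∀ i : Fin 3, ∀ t ∈ Tsub L i, t ∈ Tall L := by
    intro i t ht
    obtain ⟨a, b, c, hab, hac, hbc, hset⟩ := Set.ncard_eq_three.mp ht
    have ha : pev (L i a) t = 0 := by
      have : a ∈ {j : Fin m | pev (L i j) t = 0} := by rw [hset]; simp
      exact this
    have hb : pev (L i b) t = 0 := by
      have : b ∈ {j : Fin m | pev (L i j) t = 0} := by rw [hset]; simp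
      exact this
    have hc : pev (L i c) t = 0 := by
      have : c ∈ {j : Fin m | pev (L i j) t = 0} := by rw [hset]; simp
      exact this
    have h3le : 3 ≤ {p : Fin 3 × Fin m | pev (L p.1 p.2) t = 0}.ncard := by
      exact three_le_ncard (i, a) (i, b) (i, c) _ (hSfin t) ha hb hc
        (pair_ne_snd _ _ _ _ hab) (pair_ne_snd _ _ _ _ hac) (pair_ne_snd _ _ _ _ hbc)
    exact le_antisymm (hle3 t) h3le
  refine ⟨?_, ?_, ?_, ?_⟩
  · -- decomposition
    ext t
    constructor
    · intro ht
      by_cases h0 : ∃ j, pev (L 0 j) t = 0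
      · by_cases h1 : ∃ k, pev (L 1 k) t = 0
        · exact Set.mem_union_left _ (Set.mem_union_left _ (Set.mem_union_left _
            ⟨(pevQ L 0 t).mpr h0, (pevQ L 1 t).mpr h1⟩))
        · -- only 𝒜₀ passes through t
          have h2 : ¬∃ l, pev (L 2 l) t = 0 := by
            intro h2
            apply h1
            apply (pevQ L 1 t).mp
            have heq := pevQ2 L h3 t
            have e0 : pev (Qpoly L 0) t = 0 := (pevQ L 0 t).mpr h0
            have e2 : pev (Qpoly L 2) t = 0 := (pevQ L 2 t).mpr h2
            linear_combination e2 - e0 - heq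
          have : t ∈ Tsub L 0 := by
            show {j : Fin m | pev (L 0 j) t = 0}.ncard = 3
            rw [← ncard_S_eq L t 0 (fun i' hi' => by
              rintro ⟨j, hj⟩
              fin_cases i' <;>
                first
                  | exact hi' rfl
                  | exact h1 ⟨j, hj⟩
                  | exact h2 ⟨j, hj⟩)]
            exact ht
          exact Set.mem_union_left _ (Set.mem_union_left _ (Set.mem_union_right _ this))
      · by_cases h1 : ∃ k, pev (L 1 k) t = 0
        · -- only 𝒜₁ passes through t
          have h2 : ¬∃ l, pev (L 2 l) t = 0 := by
            intro h2
            apply h0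
            apply (pevQ L 0 t).mp
            have heq := pevQ2 L h3 t
            have e1 : pev (Qpoly L 1) t = 0 := (pevQ L 1 t).mpr h1
            have e2 : pev (Qpoly L 2) t = 0 := (pevQ L 2 t).mpr h2
            linear_combination e2 - e1 - heq
          have : t ∈ Tsub L 1 := by
            show {j : Fin m | pev (L 1 j) t = 0}.ncard = 3
            rw [← ncard_S_eq L t 1 (fun i' hi' => by
              rintro ⟨j, hj⟩
              fin_cases i' <;>
                first
                  | exact hi' rfl
                  | exact h0 ⟨j, hj⟩
                  | exact h2 ⟨j, hj⟩)]
            exact ht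
          exact Set.mem_union_left _ (Set.mem_union_right _ this)
        · -- only 𝒜₂ can pass through t
          have : t ∈ Tsub L 2 := by
            show {j : Fin m | pev (L 2 j) t = 0}.ncard = 3
            rw [← ncard_S_eq L t 2 (fun i' hi' => by
              rintro ⟨j, hj⟩
              fin_cases i' <;>
                first
                  | exact hi' rfl
                  | exact h0 ⟨j, hj⟩
                  | exact h1 ⟨j, hj⟩)]
            exact ht
          exact Set.mem_union_right _ this
    · intro ht
      rcases ht with ((ht | ht) | ht) | ht
      · exact hT0sub t ht
      · exact hTsubsub 0 t ht
      · exact hTsubsub 1 t ht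
      · exact hTsubsub 2 t ht
  · -- T₀ disjoint from each Tᵢ
    intro i
    rw [Set.disjoint_left]
    intro t ht0 hti
    obtain ⟨j, k, l, hj, hk, hl⟩ := T0_wit L h3 t ht0
    obtain ⟨a, b, c, hab, hac, hbc, hset⟩ := Set.ncard_eq_three.mp hti
    have ha : pev (L i a) t = 0 := by
      have : a ∈ {j : Fin m | pev (L i j) t = 0} := by rw [hset]; simp
      exact this
    have hb : pev (L i b) t = 0 := by
      have : b ∈ {j : Fin m | pev (L i j) t = 0} := by rw [hset]; simp
      exact this
    have hc : pev (L i c) t = 0 := by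
      have : c ∈ {j : Fin m | pev (L i j) t = 0} := by rw [hset]; simp
      exact this
    have h4 : 4 ≤ {p : Fin 3 × Fin m | pev (L p.1 p.2) t = 0}.ncard := by
      fin_cases i
      · exact four_le_ncard (0, a) (0, b) (0, c) (1, k) _ (hSfin t) ha hb hc hk
          (pair_ne_snd _ _ _ _ hab) (pair_ne_snd _ _ _ _ hac)
          (pair_ne_fst _ _ _ _ (by decide)) (pair_ne_snd _ _ _ _ hbc)
          (pair_ne_fst _ _ _ _ (by decide)) (pair_ne_fst _ _ _ _ (by decide))
      · exact four_le_ncard (1, a) (1, b) (1, c) (0, j) _ (hSfin t) ha hb hc hj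
          (pair_ne_snd _ _ _ _ hab) (pair_ne_snd _ _ _ _ hac)
          (pair_ne_fst _ _ _ _ (by decide)) (pair_ne_snd _ _ _ _ hbc)
          (pair_ne_fst _ _ _ _ (by decide)) (pair_ne_fst _ _ _ _ (by decide))
      · exact four_le_ncard (2, a) (2, b) (2, c) (0, j) _ (hSfin t) ha hb hc hj
          (pair_ne_snd _ _ _ _ hab) (pair_ne_snd _ _ _ _ hac)
          (pair_ne_fst _ _ _ _ (by decide)) (pair_ne_snd _ _ _ _ hbc)
          (pair_ne_fst _ _ _ _ (by decide)) (pair_ne_fst _ _ _ _ (by decide))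
    have := hle3 t
    omega
  · -- the Tᵢ are pairwise disjoint
    intro i i' hii
    rw [Set.disjoint_left]
    intro t hti hti'
    obtain ⟨a, b, c, hab, hac, hbc, hset⟩ := Set.ncard_eq_three.mp hti
    obtain ⟨d, e, f, _, _, _, hset'⟩ := Set.ncard_eq_three.mp hti'
    have ha : pev (L i a) t = 0 := by
      have : a ∈ {j : Fin m | pev (L i j) t = 0} := by rw [hset]; simp
      exact this
    have hb : pev (L i b) t = 0 := by
      have : b ∈ {j : Fin m | pev (L i j) t = 0} := by rw [hset]; simp
      exact this
    have hc : pev (L i c) t = 0 := by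
      have : c ∈ {j : Fin m | pev (L i j) t = 0} := by rw [hset]; simp
      exact this
    have hd : pev (L i' d) t = 0 := by
      have : d ∈ {j : Fin m | pev (L i' j) t = 0} := by rw [hset']; simp
      exact this
    have h4 : 4 ≤ {p : Fin 3 × Fin m | pev (L p.1 p.2) t = 0}.ncard := by
      exact four_le_ncard (i, a) (i, b) (i, c) (i', d) _ (hSfin t) ha hb hc hd
        (pair_ne_snd _ _ _ _ hab) (pair_ne_snd _ _ _ _ hac) (pair_ne_fst _ _ _ _ hii)
        (pair_ne_snd _ _ _ _ hbc) (pair_ne_fst _ _ _ _ hii) (pair_ne_fst _ _ _ _ hii)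
    have := hle3 t
    omega
  · -- cardinality of T₀
    have hv : ∀ (j k : Fin m), crossProduct (lvec (L 0 j)) (lvec (L 1 k)) ≠ 0 := by
      intro j k
      refine cross_ne_zero _ _ (hL 0 j).1 (hL 1 k).1 (hL 0 j).2 ?_
      intro c
      refine hnp 1 k 0 j ?_ c
      exact pair_ne_fst _ _ _ _ (by decide)
    set F : Fin m × Fin m → P2 := fun q => ipt (L 0 q.1) (L 1 q.2) (hv q.1 q.2) with hF
    have hFmem : ∀ q : Fin m × Fin m, F q ∈ T0set L := by
      intro q
      constructor
      · exact (pevQ L 0 (F q)).mpr ⟨q.1, pev_ipt_left _ _ (hL 0 q.1).1 _⟩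
      · exact (pevQ L 1 (F q)).mpr ⟨q.2, pev_ipt_right _ _ (hL 1 q.2).1 _⟩
    have hrange : T0set L = Set.range F := by
      apply Set.eq_of_subset_of_subset
      · intro t ht
        obtain ⟨hq0, hq1⟩ := ht
        obtain ⟨j, hj⟩ := (pevQ L 0 t).mp hq0
        obtain ⟨k, hk⟩ := (pevQ L 1 t).mp hq1
        exact ⟨(j, k), (ipt_unique _ _ (hL 0 j).1 (hL 1 k).1 (hv j k) t hj hk).symm⟩
      · rintro t ⟨q, rfl⟩
        exact hFmem q
    have hFinj : Function.Injective F := by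
      intro q q' he
      by_contra hne
      set t := F q with htdef
      have ht0 : t ∈ T0set L := hFmem q
      obtain ⟨j0, k0, l, _, _, hl⟩ := T0_wit L h3 t ht0
      have hj : pev (L 0 q.1) t = 0 := pev_ipt_left _ _ (hL 0 q.1).1 _
      have hk : pev (L 1 q.2) t = 0 := pev_ipt_right _ _ (hL 1 q.2).1 _
      have hj' : pev (L 0 q'.1) t = 0 := by
        rw [he]; exact pev_ipt_left _ _ (hL 0 q'.1).1 _
      have hk' : pev (L 1 q'.2) t = 0 := by
        rw [he]; exact pev_ipt_right _ _ (hL 1 q'.2).1 _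
      have hcase : q.1 ≠ q'.1 ∨ q.2 ≠ q'.2 := by
        by_contra hcc
        push_neg at hcc
        exact hne (Prod.ext hcc.1 hcc.2)
      have h4 : 4 ≤ {p : Fin 3 × Fin m | pev (L p.1 p.2) t = 0}.ncard := by
        rcases hcase with hc1 | hc2
        · exact four_le_ncard (0, q.1) (0, q'.1) (1, q.2) (2, l) _ (hSfin t)
            hj hj' hk hl (pair_ne_snd _ _ _ _ hc1) (pair_ne_fst _ _ _ _ (by decide))
            (pair_ne_fst _ _ _ _ (by decide)) (pair_ne_fst _ _ _ _ (by decide))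
            (pair_ne_fst _ _ _ _ (by decide)) (pair_ne_fst _ _ _ _ (by decide))
        · exact four_le_ncard (1, q.2) (1, q'.2) (0, q.1) (2, l) _ (hSfin t)
            hk hk' hj hl (pair_ne_snd _ _ _ _ hc2) (pair_ne_fst _ _ _ _ (by decide))
            (pair_ne_fst _ _ _ _ (by decide)) (pair_ne_fst _ _ _ _ (by decide))
            (pair_ne_fst _ _ _ _ (by decide)) (pair_ne_fst _ _ _ _ (by decide))
      have := hle3 t
      omega
    rw [hrange, ← Set.image_univ, Set.ncard_image_of_injective _ hFinj, Set.ncard_univ]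
    simp [Nat.card_eq_fintype_card]
    ring
end
end

section
/- In this setup, let h = h₁Q₁ + h₂Q₂ with h₁, h₂ ∈ S_{m−3}. Then h vanishes at (a representative of) every point of T = T₀ ∪ T₁ ∪ T₂ ∪ T₃ if and only if h₁ vanishes at every point of T₂, h₂ vanishes at every point of T₁, and h₁ − h₂ vanishes at every point of T₃. -/
open MvPolynomial Finset

noncomputable section

/-- `S_d`, the space of homogeneous polynomials of degree `d`, for an integer `d`
(with `S_d = 0` for `d < 0`). -/
def SZ (d : ℤ) : Submodule ℂ MvP :=
  if 0 ≤ d then homogeneousSubmodule (Fin 3) ℂ d.toNat else ⊥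


lemma pev_Qpoly {m : ℕ} (L : Fin 3 → Fin m → MvP) (i : Fin 3) (t : P2) :
    pev (Qpoly L i) t = ∏ j, pev (L i j) t := by
  simp [pev, Qpoly]

lemma Q_zero_of_mem {m : ℕ} (L : Fin 3 → Fin m → MvP) (i : Fin 3) (t : P2)
    (ht : t ∈ Tsub L i) : pev (Qpoly L i) t = 0 := by
  obtain ⟨j, hj⟩ : {j : Fin m | pev (L i j) t = 0}.Nonempty := by
    apply Set.nonempty_of_ncard_ne_zero
    rw [show ({j : Fin m | pev (L i j) t = 0}).ncard = 3 from ht]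
    norm_num
  rw [pev_Qpoly]
  exact Finset.prod_eq_zero (Finset.mem_univ j) hj

lemma Q_ne_zero_of_mem {m : ℕ} (L : Fin 3 → Fin m → MvP) (h : PencilSetup m L)
    (i i' : Fin 3) (hne : i' ≠ i) (t : P2) (ht : t ∈ Tsub L i) :
    pev (Qpoly L i') t ≠ 0 := by
  intro h0
  rw [pev_Qpoly] at h0
  obtain ⟨j', -, hj'⟩ := Finset.prod_eq_zero_iff.mp h0
  have hA : ({j : Fin m | pev (L i j) t = 0}).ncard = 3 := ht
  have hsub : insert (i', j') ((fun j => ((i, j) : Fin 3 × Fin m)) ''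
      {j : Fin m | pev (L i j) t = 0}) ⊆ {p : Fin 3 × Fin m | pev (L p.1 p.2) t = 0} := by
    rintro p (rfl | ⟨j, hj, rfl⟩)
    · exact hj'
    · exact hj
  have hinj : Function.Injective (fun j : Fin m => ((i, j) : Fin 3 × Fin m)) := by
    intro a b hab; simpa using hab
  have hnotmem : (i', j') ∉ (fun j : Fin m => ((i, j) : Fin 3 × Fin m)) ''
      {j : Fin m | pev (L i j) t = 0} := by
    rintro ⟨j, -, hj⟩
    exact hne (congrArg Prod.fst hj).symm
  have h4 : (insert (i', j') ((fun j : Fin m => ((i, j) : Fin 3 × Fin m)) ''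
      {j : Fin m | pev (L i j) t = 0})).ncard = 4 := by
    rw [Set.ncard_insert_of_notMem hnotmem (Set.toFinite _),
        Set.ncard_image_of_injective _ hinj, hA]
  have hle := Set.ncard_le_ncard hsub (Set.toFinite _)
  have h3 := h.2.2.2.2 t
  omega

/-- Let `h = h₁Q₁ + h₂Q₂` with `h₁, h₂ ∈ S_{m-3}`. Then `h` vanishes at
(a representative of) every point of `T = T₀ ∪ T₁ ∪ T₂ ∪ T₃` if and only if `h₁` vanishes
at every point of `T₂`, `h₂` vanishes at every point of `T₁`, and `h₁ - h₂` vanishes at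
every point of `T₃`. -/
theorem vanishing_on_T_iff (m : ℕ) (L : Fin 3 → Fin m → MvP) (h : PencilSetup m L)
    (h₁ h₂ : MvP) (hh₁ : h₁ ∈ SZ ((m : ℤ) - 3)) (hh₂ : h₂ ∈ SZ ((m : ℤ) - 3)) :
    (∀ t ∈ T0set L ∪ Tsub L 0 ∪ Tsub L 1 ∪ Tsub L 2,
        pev (h₁ * Qpoly L 0 + h₂ * Qpoly L 1) t = 0) ↔
      ((∀ t ∈ Tsub L 1, pev h₁ t = 0) ∧ (∀ t ∈ Tsub L 0, pev h₂ t = 0) ∧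
        (∀ t ∈ Tsub L 2, pev (h₁ - h₂) t = 0)) := by
  have hQ3 : Qpoly L 0 + Qpoly L 1 = Qpoly L 2 := h.2.2.1
  have key : ∀ t, pev (h₁ * Qpoly L 0 + h₂ * Qpoly L 1) t =
      pev h₁ t * pev (Qpoly L 0) t + pev h₂ t * pev (Qpoly L 1) t := by
    intro t; simp [pev]
  have pev_sub : ∀ t, pev (h₁ - h₂) t = pev h₁ t - pev h₂ t := by
    intro t; simp [pev]
  constructor
  · intro H
    refine ⟨?_, ?_, ?_⟩
    · intro t ht
      have h0 := H t (Or.inl (Or.inr ht))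
      rw [key, Q_zero_of_mem L 1 t ht, mul_zero, add_zero, mul_eq_zero] at h0
      exact h0.resolve_right (Q_ne_zero_of_mem L h 1 0 (by decide) t ht)
    · intro t ht
      have h0 := H t (Or.inl (Or.inl (Or.inr ht)))
      rw [key, Q_zero_of_mem L 0 t ht, mul_zero, zero_add, mul_eq_zero] at h0
      exact h0.resolve_right (Q_ne_zero_of_mem L h 0 1 (by decide) t ht)
    · intro t ht
      have h0 := H t (Or.inr ht)
      rw [key] at h0
      have hsum : pev (Qpoly L 0) t + pev (Qpoly L 1) t = 0 := by
        have : pev (Qpoly L 0 + Qpoly L 1) t = pev (Qpoly L 2) t := by rw [hQ3]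
        simpa [pev] using this.trans (Q_zero_of_mem L 2 t ht)
      have hz : (pev h₁ t - pev h₂ t) * pev (Qpoly L 0) t = 0 := by
        linear_combination h0 - pev h₂ t * hsum
      rcases mul_eq_zero.mp hz with hz | hz
      · rw [pev_sub]; exact hz
      · exact absurd hz (Q_ne_zero_of_mem L h 2 0 (by decide) t ht)
  · rintro ⟨H1, H2, H3⟩ t ht
    rw [key]
    rcases ht with ((ht0 | ht1) | ht2) | ht3
    · rw [ht0.1, ht0.2]; ring
    · rw [Q_zero_of_mem L 0 t ht1, H2 t ht1]; ring
    · rw [Q_zero_of_mem L 1 t ht2, H1 t ht2]; ring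
    · have hsum : pev (Qpoly L 0) t + pev (Qpoly L 1) t = 0 := by
        have : pev (Qpoly L 0 + Qpoly L 1) t = pev (Qpoly L 2) t := by rw [hQ3]
        simpa [pev] using this.trans (Q_zero_of_mem L 2 t ht3)
      have hd : pev h₁ t - pev h₂ t = 0 := by
        have := H3 t ht3; rw [pev_sub] at this; exact this
      linear_combination pev (Qpoly L 0) t * hd + pev h₂ t * hsum
end
end

section
/- An arrangement of 6 pairwise distinct lines in ℙ²(ℂ) in which no point lies on four or more of the lines has at most 4 triple points, i.e., at most 4 points lying on exactly three of the lines. (Consequently, in an 18-line arrangement with only double and triple points composed of a reduced pencil, the total number of triple points is at most 36 + 3·4 = 48.) -/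
open MvPolynomial Finset

noncomputable section

/-- A degree-1 Finsupp on `Fin 3` is a single. -/
lemma aux_deg_one_single {d : Fin 3 →₀ ℕ} (hd : Finsupp.degree d = 1) :
    ∃ k : Fin 3, d = Finsupp.single k 1 := by
  have hsum : d 0 + d 1 + d 2 = 1 := by
    have : Finsupp.degree d = ∑ i : Fin 3, d i :=
      Finset.sum_subset (Finset.subset_univ _)
        (fun x _ hx => Finsupp.notMem_support_iff.mp hx)
    rw [this, Fin.sum_univ_three] at hd
    exact hd
  rcases (by omega : (d 0 = 1 ∧ d 1 = 0 ∧ d 2 = 0) ∨ (d 0 = 0 ∧ d 1 = 1 ∧ d 2 = 0)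
      ∨ (d 0 = 0 ∧ d 1 = 0 ∧ d 2 = 1)) with ⟨h0, h1, h2⟩ | ⟨h0, h1, h2⟩ | ⟨h0, h1, h2⟩
  · exact ⟨0, by ext i; fin_cases i <;> simp [h0, h1, h2, Finsupp.single_apply]⟩
  · exact ⟨1, by ext i; fin_cases i <;> simp [h0, h1, h2, Finsupp.single_apply]⟩
  · exact ⟨2, by ext i; fin_cases i <;> simp [h0, h1, h2, Finsupp.single_apply]⟩

/-- Representation of a homogeneous degree-1 polynomial as linear combination of variables. -/
lemma aux_rep (h : MvP) (hh : h.IsHomogeneous 1) :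
    h = ∑ k : Fin 3, C (coeff (Finsupp.single k 1) h) * X k := by
  classical
  ext d
  rw [coeff_sum]
  simp only [coeff_C_mul, coeff_X']
  by_cases hd : ∃ k : Fin 3, d = Finsupp.single k 1
  · obtain ⟨k, rfl⟩ := hd
    rw [Finset.sum_eq_single k]
    · simp
    · intro b _ hb
      rw [if_neg, mul_zero]
      intro hbk
      exact hb (Finsupp.single_left_injective one_ne_zero hbk)
    · simp
  · push_neg at hd
    have hcd : coeff d h = 0 := by
      by_contra hc
      have := hh hc
      replace this : Finsupp.degree d = 1 := by rw [Finsupp.degree_eq_weight_one]; exact this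
      obtain ⟨k, rfl⟩ := aux_deg_one_single this
      exact hd k rfl
    rw [hcd]
    rw [Finset.sum_eq_zero]
    intro k _
    rw [if_neg, mul_zero]
    exact fun hkd => hd k hkd.symm

/-- BAC-CAB style identity: `(a ×₃ b) ×₃ v = (a ⬝ᵥ v) • b - (b ⬝ᵥ v) • a`. -/
lemma aux_cross_cross (a b v : Fin 3 → ℂ) :
    crossProduct (crossProduct a b) v =
      (dotProduct a v) • b - (dotProduct b v) • a := by
  ext i
  fin_cases i <;>
    simp [cross_apply, dotProduct, Fin.sum_univ_three] <;> ring

/-- Two points lying on two independent lines coincide. -/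
lemma aux_unique_point {c c' : Fin 3 → ℂ} (hcc' : crossProduct c c' ≠ 0)
    {t t' : P2} (h1 : dotProduct c t.rep = 0) (h2 : dotProduct c' t.rep = 0)
    (h3 : dotProduct c t'.rep = 0) (h4 : dotProduct c' t'.rep = 0) : t = t' := by
  have key : ∀ u : P2, dotProduct c u.rep = 0 → dotProduct c' u.rep = 0 →
      Projectivization.mk ℂ (crossProduct c c') hcc' = u := by
    intro u hu hu'
    have hz : crossProduct (crossProduct c c') u.rep = 0 := by
      rw [aux_cross_cross, hu, hu', zero_smul, zero_smul, sub_zero]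
    rw [show u = Projectivization.mk ℂ u.rep u.rep_nonzero from (Projectivization.mk_rep u).symm]
    rw [Projectivization.mk_eq_mk_iff_crossProduct_eq_zero]
    exact hz
  rw [← key t h1 h2, ← key t' h3 h4]

/-- Combinatorial core: a family of 3-subsets of `Fin 6` pairwise meeting in at most one
point has at most 4 members. -/
lemma aux_combo (F : Finset (Finset (Fin 6))) (h3 : ∀ s ∈ F, s.card = 3)
    (hint : ∀ s ∈ F, ∀ t ∈ F, s ≠ t → (s ∩ t).card ≤ 1) : F.card ≤ 4 := by
  classical
  have bnd : ∀ i : Fin 6, (F.filter fun s => i ∈ s).card ≤ 2 := by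
    intro i
    by_contra hi
    push_neg at hi
    set G := F.filter fun s => i ∈ s with hG
    have hdisj : ∀ s ∈ G, ∀ t ∈ G, s ≠ t → Disjoint (s.erase i) (t.erase i) := by
      intro s hs t ht hst
      rw [Finset.disjoint_left]
      intro j hjs hjt
      have hji : j ≠ i := (Finset.mem_erase.mp hjs).1
      have h2le : 2 ≤ (s ∩ t).card := by
        apply Finset.one_lt_card.mpr
        refine ⟨j, ?_, i, ?_, hji⟩
        · exact Finset.mem_inter.mpr ⟨(Finset.mem_erase.mp hjs).2, (Finset.mem_erase.mp hjt).2⟩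
        · exact Finset.mem_inter.mpr ⟨(Finset.mem_filter.mp hs).2, (Finset.mem_filter.mp ht).2⟩
      have := hint s (Finset.mem_filter.mp hs).1 t (Finset.mem_filter.mp ht).1 hst
      omega
    have hcard : (G.biUnion fun s => s.erase i).card = ∑ s ∈ G, (s.erase i).card :=
      Finset.card_biUnion hdisj
    have hsum : ∑ s ∈ G, (s.erase i).card = 2 * G.card := by
      rw [Finset.sum_congr rfl (fun s hs => ?_), Finset.sum_const, smul_eq_mul, mul_comm]
      rw [Finset.card_erase_of_mem (Finset.mem_filter.mp hs).2,
        h3 s (Finset.mem_filter.mp hs).1]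
    have hsub : (G.biUnion fun s => s.erase i) ⊆ Finset.univ.erase i := by
      intro j hj
      obtain ⟨s, _, hjs⟩ := Finset.mem_biUnion.mp hj
      exact Finset.mem_erase.mpr ⟨(Finset.mem_erase.mp hjs).1, Finset.mem_univ j⟩
    have h5 : (G.biUnion fun s => s.erase i).card ≤ 5 := by
      have := Finset.card_le_card hsub
      simpa using this
    omega
  have key : ∑ s ∈ F, s.card = ∑ i : Fin 6, (F.filter fun s => i ∈ s).card := by
    simp_rw [Finset.card_filter]
    rw [Finset.sum_comm]
    apply Finset.sum_congr rfl
    intro s _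
    simp [Finset.card_filter]
  have h3F : ∑ s ∈ F, s.card = 3 * F.card := by
    rw [Finset.sum_congr rfl h3, Finset.sum_const, smul_eq_mul, mul_comm]
  have : ∑ i : Fin 6, (F.filter fun s => i ∈ s).card ≤ 12 := by
    calc ∑ i : Fin 6, (F.filter fun s => i ∈ s).card ≤ ∑ _i : Fin 6, 2 :=
          Finset.sum_le_sum fun i _ => bnd i
      _ = 12 := by simp
  omega

/-- An arrangement of `6` pairwise distinct lines in `ℙ²(ℂ)` (given by
`6` pairwise non-proportional nonzero linear forms) in which no point lies on four or
more of the lines has at most `4` triple points, i.e. at most `4` points lying on exactly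
three of the lines. -/
theorem six_lines_at_most_four_triple_points (L : Fin 6 → MvP)
    (hhom : ∀ i, (L i).IsHomogeneous 1) (hne : ∀ i, L i ≠ 0)
    (hnp : ∀ i j : Fin 6, i ≠ j → ∀ c : ℂ, L i ≠ c • L j)
    (hd : ∀ t : P2, {i : Fin 6 | pev (L i) t = 0}.ncard ≤ 3) :
    {t : P2 | {i : Fin 6 | pev (L i) t = 0}.ncard = 3}.ncard ≤ 4 := by
  classical
  set c : Fin 6 → (Fin 3 → ℂ) := fun i k => coeff (Finsupp.single k 1) (L i) with hc
  have hev : ∀ (i) (t : P2), pev (L i) t = dotProduct (c i) t.rep := by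
    intro i t
    show eval t.rep (L i) = _
    conv_lhs => rw [aux_rep (L i) (hhom i)]
    simp [dotProduct, hc]
  have hcr : ∀ i j, i ≠ j → crossProduct (c i) (c j) ≠ 0 := by
    intro i j hij hzero
    have hci : c i ≠ 0 := by
      intro h0
      apply hne i
      rw [aux_rep (L i) (hhom i)]
      apply Finset.sum_eq_zero
      intro k _
      have hk : coeff (Finsupp.single k 1) (L i) = (0 : ℂ) := congrFun h0 k
      rw [hk, map_zero, zero_mul]
    have hnli : ¬ LinearIndependent ℂ ![c i, c j] := by
      rw [← crossProduct_ne_zero_iff_linearIndependent]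
      simp [hzero]
    rw [LinearIndependent.pair_iff' hci] at hnli
    push_neg at hnli
    obtain ⟨a, ha⟩ := hnli
    apply hnp j i hij.symm a
    rw [aux_rep (L j) (hhom j), aux_rep (L i) (hhom i), Finset.smul_sum]
    apply Finset.sum_congr rfl
    intro k _
    have hk : a * coeff (Finsupp.single k 1) (L i) = coeff (Finsupp.single k 1) (L j) :=
      congrFun ha k
    rw [← hk, smul_eq_C_mul, map_mul, mul_assoc]
  set S : P2 → Finset (Fin 6) := fun t => Finset.univ.filter fun i => pev (L i) t = 0
    with hSdef
  have hmem : ∀ (t : P2) (k), k ∈ S t ↔ pev (L k) t = 0 := by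
    intro t k; simp [hSdef]
  have hset : ∀ t : P2, {i : Fin 6 | pev (L i) t = 0} = ↑(S t) := by
    intro t; ext i; simp [hSdef]
  simp_rw [hset, Set.ncard_coe_finset]
  set T := {t : P2 | (S t).card = 3} with hT
  have huniq : ∀ {t t' : P2} {i j : Fin 6}, i ≠ j → i ∈ S t → j ∈ S t → i ∈ S t' →
      j ∈ S t' → t = t' := by
    intro t t' i j hij hi hj hi' hj'
    exact aux_unique_point (hcr i j hij)
      (by rw [← hev]; exact (hmem t i).mp hi) (by rw [← hev]; exact (hmem t j).mp hj)
      (by rw [← hev]; exact (hmem t' i).mp hi') (by rw [← hev]; exact (hmem t' j).mp hj')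
  have hinj : Set.InjOn S T := by
    intro t ht t' ht' hSt
    have h2 : 1 < (S t).card := by rw [ht]; norm_num
    obtain ⟨i, hi, j, hj, hij⟩ := Finset.one_lt_card.mp h2
    exact huniq hij hi hj (hSt ▸ hi) (hSt ▸ hj)
  rw [← Set.ncard_image_of_injOn hinj]
  have hfin2 : (S '' T).Finite := Set.toFinite _
  rw [Set.ncard_eq_toFinset_card (S '' T) hfin2]
  apply aux_combo
  · intro s hs
    rw [Set.Finite.mem_toFinset] at hs
    obtain ⟨t, ht, rfl⟩ := hs
    exact ht
  · intro s hs s' hs' hss'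
    rw [Set.Finite.mem_toFinset] at hs hs'
    obtain ⟨t, ht, rfl⟩ := hs
    obtain ⟨t', ht', rfl⟩ := hs'
    by_contra hcard
    push_neg at hcard
    obtain ⟨i, hi, j, hj, hij⟩ := Finset.one_lt_card.mp hcard
    have hi1 := Finset.mem_inter.mp hi
    have hj1 := Finset.mem_inter.mp hj
    exact hss' (congrArg S (huniq hij hi1.1 hj1.1 hi1.2 hj1.2))
end
end
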